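/- Let γ: (a,b) → ℝⁿ be a C¹ curve, t₀ ∈ (a,b) with γ'(t₀) ≠ 0, and let M be an invertible n × n real matrix. Suppose there are sequences (t_i) and (t_i') in (a,b) with t_i ≠ t₀ for all i, t_i → t₀, t_i' → t₀, and M(γ(t_i) − γ(t₀)) = γ(t_i') − γ(t₀) for all i. If the limit λ = lim_{i→∞} (t_i' − t₀)/(t_i − t₀) exists, then M γ'(t₀) = λ γ'(t₀) and λ ≠ 0; in particular γ'(t₀) is an eigenvector of M with nonzero real eigenvalue λ. -/

import Mathlib

open Set Filter

/-- Let `γ : (a,b) → ℝⁿ` be a `C¹` curve, `t₀ ∈ (a,b)` with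
`γ' t₀ ≠ 0`, and let `M` be an invertible `n × n` real matrix.  Suppose there are
sequences `(tᵢ)`, `(tᵢ')` in `(a,b)` with `tᵢ ≠ t₀`, `tᵢ → t₀`, `tᵢ' → t₀`, and
`M (γ tᵢ − γ t₀) = γ tᵢ' − γ t₀` for all `i`.  If `λ = lim (tᵢ' − t₀)/(tᵢ − t₀)`
exists, then `M (γ' t₀) = λ • γ' t₀` and `λ ≠ 0`; in particular `γ' t₀` is an
eigenvector of `M` with nonzero real eigenvalue `λ`. -/
theorem matrix_invariance_gives_eigenvector
    {n : ℕ} (a b : ℝ) (γ γ' : ℝ → (Fin n → ℝ))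
    (hC1 : ContDiffOn ℝ 1 γ (Ioo a b))
    (hderiv : ∀ s ∈ Ioo a b, HasDerivAt γ (γ' s) s)
    (t₀ : ℝ) (ht₀ : t₀ ∈ Ioo a b) (hne : γ' t₀ ≠ 0)
    (M : Matrix (Fin n) (Fin n) ℝ) (hM : IsUnit M)
    (t t' : ℕ → ℝ)
    (htmem : ∀ i, t i ∈ Ioo a b) (ht'mem : ∀ i, t' i ∈ Ioo a b)
    (htne : ∀ i, t i ≠ t₀)
    (htlim : Tendsto t atTop (nhds t₀)) (ht'lim : Tendsto t' atTop (nhds t₀))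
    (hMγ : ∀ i, M.mulVec (γ (t i) - γ t₀) = γ (t' i) - γ t₀)
    (lam : ℝ)
    (hlam : Tendsto (fun i => (t' i - t₀) / (t i - t₀)) atTop (nhds lam)) :
    M.mulVec (γ' t₀) = lam • γ' t₀ ∧ lam ≠ 0 := by
  have hd : HasDerivAt γ (γ' t₀) t₀ := hderiv t₀ ht₀
  -- G: remainder quotient, 0 at t₀
  set f : ℝ → (Fin n → ℝ) := fun s => γ s - (s - t₀) • γ' t₀ with hf
  have hfd : HasDerivAt f 0 t₀ := by
    have h1 : HasDerivAt (fun s : ℝ => (s - t₀) • γ' t₀) ((1:ℝ) • γ' t₀) t₀ :=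
      ((hasDerivAt_id t₀).sub_const t₀).smul_const (γ' t₀)
    have h2 := hd.sub h1
    rw [one_smul, sub_self] at h2
    exact h2
  set G : ℝ → (Fin n → ℝ) := fun s => slope f t₀ s with hG
  have hG0 : G t₀ = 0 := by simp [hG, slope_def_field, slope]
  have hGlim' : Tendsto G (nhdsWithin t₀ {t₀}ᶜ) (nhds 0) :=
    hasDerivAt_iff_tendsto_slope.mp hfd
  have hGlim : Tendsto G (nhds t₀) (nhds 0) := by
    rw [← nhdsNE_sup_pure t₀]
    refine Tendsto.sup hGlim' ?_
    rw [tendsto_pure_left]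
    intro s hs
    rw [hG0]
    exact mem_of_mem_nhds hs
  -- key identity
  have key : ∀ s : ℝ, γ s - γ t₀ = (s - t₀) • (γ' t₀ + G s) := by
    intro s
    by_cases hs : s = t₀
    · simp [hs, hG0]
    · have hs' : s - t₀ ≠ 0 := sub_ne_zero.mpr hs
      have : (s - t₀) • G s = γ s - γ t₀ - (s - t₀) • γ' t₀ := by
        simp only [hG, hf, slope, vsub_eq_sub, sub_self, zero_smul, sub_zero, smul_inv_smul₀ hs']
        abel
      rw [smul_add, this]
      abel
  -- t tends within ≠ t₀
  have htlim' : Tendsto t atTop (nhdsWithin t₀ {t₀}ᶜ) :=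
    tendsto_nhdsWithin_iff.mpr ⟨htlim, Eventually.of_forall fun i => htne i⟩
  have hslope : Tendsto (fun i => slope γ t₀ (t i)) atTop (nhds (γ' t₀)) :=
    (hasDerivAt_iff_tendsto_slope.mp hd).comp htlim'
  have hcont : Continuous fun v : Fin n → ℝ => M.mulVec v := by
    have := (Matrix.mulVecLin M).continuous_of_finiteDimensional
    exact this
  have hL : Tendsto (fun i => M.mulVec (slope γ t₀ (t i))) atTop
      (nhds (M.mulVec (γ' t₀))) := (hcont.tendsto _).comp hslope
  have heq : ∀ i, M.mulVec (slope γ t₀ (t i)) =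
      ((t' i - t₀) / (t i - t₀)) • (γ' t₀ + G (t' i)) := by
    intro i
    have hti : t i - t₀ ≠ 0 := sub_ne_zero.mpr (htne i)
    have : slope γ t₀ (t i) = (t i - t₀)⁻¹ • (γ (t i) - γ t₀) := by
      simp [slope, vsub_eq_sub]
    rw [this, Matrix.mulVec_smul, hMγ i, key (t' i), smul_smul, div_eq_mul_inv,
      mul_comm]
  have hR : Tendsto (fun i => ((t' i - t₀) / (t i - t₀)) • (γ' t₀ + G (t' i)))
      atTop (nhds (lam • (γ' t₀ + 0))) :=
    hlam.smul (tendsto_const_nhds.add (hGlim.comp ht'lim))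
  have hmain : M.mulVec (γ' t₀) = lam • γ' t₀ := by
    have := tendsto_nhds_unique (by simpa only [heq] using hL) hR
    simpa using this
  refine ⟨hmain, ?_⟩
  intro h0
  have hinj : Function.Injective M.mulVec := Matrix.mulVec_injective_iff_isUnit.mpr hM
  apply hne
  have : M.mulVec (γ' t₀) = M.mulVec 0 := by
    rw [hmain, h0, zero_smul, Matrix.mulVec_zero]
  exact hinj this
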